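/- Monotonicity of weighted Struve-type functions: for k ≥ 1, the function s ↦ s^{−k} M_k(s) = ∫₀^{π/2} e^{−s cos θ} sin^{2k}(θ) dθ is monotone decreasing on (0,∞), and s ↦ s^k M_k(s) = s^{2k} ∫₀^{π/2} e^{−s cos θ} sin^{2k}(θ) dθ is monotone increasing on (0,∞). -/

import Mathlib

set_option maxHeartbeats 1000000
open Real intervalIntegral Set

private lemma struve_key (k : ℕ) (hk : 1 ≤ k) {s : ℝ} (hs : 0 < s) :
    s ^ (2 * k) * ∫ θ in (0 : ℝ)..(Real.pi / 2),
        Real.exp (-s * Real.cos θ) * Real.sin θ ^ (2 * k)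
    = ∫ u in (0 : ℝ)..s, Real.exp (-u) * (s ^ 2 - u ^ 2) ^ (((2 * k - 1 : ℕ) : ℝ) / 2) := by
  set p : ℝ := ((2 * k - 1 : ℕ) : ℝ) / 2 with hp
  have hp0 : 0 ≤ p := by positivity
  have hg : Continuous fun u : ℝ => Real.exp (-u) * (s ^ 2 - u ^ 2) ^ p := by
    apply (Real.continuous_exp.comp continuous_neg).mul
    exact (Real.continuous_rpow_const hp0).comp (by continuity)
  have hderiv : ∀ x ∈ uIcc (0 : ℝ) (Real.pi / 2),
      HasDerivAt (fun θ => s * Real.cos θ) (-(s * Real.sin x)) x := by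
    intro x _
    simpa [mul_comm] using (Real.hasDerivAt_cos x).const_mul s
  have h := intervalIntegral.integral_comp_smul_deriv hderiv
    (Continuous.continuousOn (by continuity)) hg
  simp only [Real.cos_zero, mul_one, Real.cos_pi_div_two, mul_zero,
    Function.comp_apply] at h
  rw [intervalIntegral.integral_symm 0 s] at h
  -- h : ∫ θ in 0..π/2, (-(s*sin θ)) • g (s cos θ) = - ∫ u in 0..s, g u
  have h2 : ∀ θ ∈ Set.uIcc (0:ℝ) (Real.pi/2),
      (-(s * Real.sin θ)) • (Real.exp (-(s * Real.cos θ)) *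
        (s ^ 2 - (s * Real.cos θ) ^ 2) ^ p)
      = -(s ^ (2 * k) * (Real.exp (-s * Real.cos θ) * Real.sin θ ^ (2 * k))) := by
    intro θ hθ
    rw [Set.uIcc_of_le (by positivity)] at hθ
    have hsin : 0 ≤ Real.sin θ := Real.sin_nonneg_of_nonneg_of_le_pi hθ.1
      (hθ.2.trans (by linarith [Real.pi_pos]))
    have hbase : s ^ 2 - (s * Real.cos θ) ^ 2 = (s * Real.sin θ) ^ 2 := by
      have := Real.sin_sq_add_cos_sq θ; ring_nf; nlinarith [this]
    have hpow : ((s * Real.sin θ) ^ 2) ^ p = (s * Real.sin θ) ^ (2 * k - 1) := by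
      have hns : 0 ≤ s * Real.sin θ := by positivity
      rw [← Real.rpow_natCast (s * Real.sin θ) 2, ← Real.rpow_mul hns,
        ← Real.rpow_natCast (s * Real.sin θ) (2 * k - 1)]
      congr 1
      rw [hp]
      field_simp
      push_cast; ring
    have hs2k : s ^ (2 * k) = s ^ (2 * k - 1) * s := by
      rw [← pow_succ]; congr 1; omega
    have hsin2k : Real.sin θ ^ (2 * k) = Real.sin θ ^ (2 * k - 1) * Real.sin θ := by
      rw [← pow_succ]; congr 1; omega
    rw [hbase, hpow, smul_eq_mul, mul_pow, hs2k, hsin2k, neg_mul s]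
    ring
  rw [intervalIntegral.integral_congr h2, intervalIntegral.integral_neg,
    intervalIntegral.integral_const_mul, neg_inj] at h
  exact h

theorem struve_monotone (k : ℕ) (hk : 1 ≤ k) :
    AntitoneOn (fun s : ℝ => ∫ θ in (0 : ℝ)..(Real.pi / 2),
        Real.exp (-s * Real.cos θ) * Real.sin θ ^ (2 * k)) (Set.Ioi 0)
    ∧ MonotoneOn (fun s : ℝ => s ^ (2 * k) * ∫ θ in (0 : ℝ)..(Real.pi / 2),
        Real.exp (-s * Real.cos θ) * Real.sin θ ^ (2 * k)) (Set.Ioi 0) := by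
  have hpi2 : (0:ℝ) ≤ Real.pi / 2 := by positivity
  constructor
  · intro a ha b hb hab
    apply intervalIntegral.integral_mono_on hpi2
    · exact (Continuous.intervalIntegrable (by continuity) _ _)
    · exact (Continuous.intervalIntegrable (by continuity) _ _)
    · intro θ hθ
      have hcos : 0 ≤ Real.cos θ := Real.cos_nonneg_of_mem_Icc
        ⟨by linarith [hθ.1, Real.pi_pos], hθ.2⟩
      have : -b * Real.cos θ ≤ -a * Real.cos θ := by nlinarith
      exact mul_le_mul_of_nonneg_right (Real.exp_le_exp.2 this)
        ((even_two_mul k).pow_nonneg _)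
  · intro a ha b hb hab
    simp only [Set.mem_Ioi] at ha hb
    dsimp only
    rw [struve_key k hk ha, struve_key k hk hb]
    set p : ℝ := ((2 * k - 1 : ℕ) : ℝ) / 2 with hp
    have hp0 : 0 ≤ p := by positivity
    have hcont : ∀ c : ℝ, Continuous fun u : ℝ => Real.exp (-u) * (c ^ 2 - u ^ 2) ^ p := by
      intro c
      apply (Real.continuous_exp.comp continuous_neg).mul
      exact (Real.continuous_rpow_const hp0).comp (by continuity)
    calc ∫ u in (0:ℝ)..a, Real.exp (-u) * (a ^ 2 - u ^ 2) ^ p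
        ≤ ∫ u in (0:ℝ)..a, Real.exp (-u) * (b ^ 2 - u ^ 2) ^ p := by
          apply intervalIntegral.integral_mono_on ha.le
          · exact (hcont a).intervalIntegrable _ _
          · exact (hcont b).intervalIntegrable _ _
          · intro u hu
            apply mul_le_mul_of_nonneg_left _ (Real.exp_nonneg _)
            apply Real.rpow_le_rpow _ _ hp0
            · nlinarith [hu.1, hu.2]
            · nlinarith
      _ ≤ ∫ u in (0:ℝ)..b, Real.exp (-u) * (b ^ 2 - u ^ 2) ^ p := by
          apply intervalIntegral.integral_mono_interval le_rfl ha.le hab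
          · filter_upwards [MeasureTheory.ae_restrict_mem measurableSet_Ioc] with u hu
            apply mul_nonneg (Real.exp_nonneg _)
            apply Real.rpow_nonneg
            nlinarith [hu.1, hu.2]
          · exact (hcont b).intervalIntegrable _ _
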